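/- Let R be a discrete valuation domain with prime element p and let λ be an ordinal of uncountable cofinality. For every ordinal α < λ let G_α be a reduced torsion R-module of length at most α. Then the direct sum G = ⊕_{α<λ} G_α is complete in the p^λ-adic topology, i.e., the canonical map G → lim_{σ<λ} G/p^σG is an isomorphism. -/

import Mathlib

universe u v w

open Ordinal

/-- The submodule `p^σ G`, defined by transfinite recursion. -/
noncomputable def pPow (R : Type u) [CommRing R] (p : R) (G : Type v) [AddCommGroup G]
    [Module R G] (σ : Ordinal.{w}) : Submodule R G :=
  Ordinal.limitRecOn σ ⊤ (fun _ N => N.map (LinearMap.lsmul R G p))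
    (fun o _ ih => ⨅ ρ : Set.Iio o, ih ρ.1 ρ.2)


section lemmas
variable {R : Type u} [CommRing R] (p : R) (G : Type v) [AddCommGroup G] [Module R G]

lemma pPow_zero : pPow R p G (0 : Ordinal.{w}) = ⊤ :=
  Ordinal.limitRecOn_zero ..

lemma pPow_succ (σ : Ordinal.{w}) :
    pPow R p G (Order.succ σ) = (pPow R p G σ).map (LinearMap.lsmul R G p) :=
  Ordinal.limitRecOn_succ ..

lemma pPow_limit {σ : Ordinal.{w}} (h : Order.IsSuccLimit σ) :
    pPow R p G σ = ⨅ ρ : Set.Iio σ, pPow R p G ρ.1 :=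
  Ordinal.limitRecOn_limit _ _ _ _ h

lemma pPow_succ_le (σ : Ordinal.{w}) : pPow R p G (Order.succ σ) ≤ pPow R p G σ := by
  rw [pPow_succ]
  rintro _ ⟨y, hy, rfl⟩
  exact (pPow R p G σ).smul_mem p hy

variable {H : Type*} [AddCommGroup H] [Module R H]

lemma pPow_map_le (f : G →ₗ[R] H) (σ : Ordinal.{w}) :
    (pPow R p G σ).map f ≤ pPow R p H σ := by
  induction σ using Ordinal.limitRecOn with
  | zero => rw [pPow_zero p G, pPow_zero p H]; exact le_top
  | add_one σ ih =>
    rw [Ordinal.add_one_eq_succ, pPow_succ, pPow_succ]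
    rintro _ ⟨_, ⟨y, hy, rfl⟩, rfl⟩
    exact ⟨f y, ih ⟨y, hy, rfl⟩, by simp⟩
  | limit o ho ih =>
    rw [pPow_limit _ _ ho, pPow_limit _ _ ho]
    exact le_iInf fun ρ => (Submodule.map_mono (iInf_le _ ρ)).trans (ih ρ.1 ρ.2)

lemma pPow_map_mem (f : G →ₗ[R] H) (σ : Ordinal.{w}) {x : G} (hx : x ∈ pPow R p G σ) :
    f x ∈ pPow R p H σ :=
  pPow_map_le p G f σ ⟨x, hx, rfl⟩

end lemmas

/-- `G` is (Hausdorff and) complete in the `p^λ`-adic topology: the canonical map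
`G → lim_{σ<λ} G/p^σ G` into the inverse limit is bijective. -/
def IsPLamComplete (R : Type u) [CommRing R] (p : R) (lam : Ordinal.{w}) (G : Type v)
    [AddCommGroup G] [Module R G] : Prop :=
  (∀ g : G, (∀ σ < lam, g ∈ pPow R p G σ) → g = 0) ∧
  ∀ x : (∀ σ : Set.Iio lam, G ⧸ pPow R p G σ.1),
    (∀ σ τ : Set.Iio lam, σ.1 ≤ τ.1 → ∀ g : G,
      Submodule.Quotient.mk g = x τ → Submodule.Quotient.mk g = x σ) →
    ∃ g : G, ∀ σ : Set.Iio lam, Submodule.Quotient.mk g = x σ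

open DirectSum in
theorem stmt8 (R : Type u) [CommRing R] [IsDomain R] [IsDiscreteValuationRing R]
    (p : R) (hp : Irreducible p)
    (lam : Ordinal.{w}) (hcof : Cardinal.aleph0 < lam.cof)
    (Gfam : Set.Iio lam → Type v) [∀ α, AddCommGroup (Gfam α)] [∀ α, Module R (Gfam α)]
    (htor : ∀ α, Module.IsTorsion R (Gfam α))
    (hlen : ∀ α : Set.Iio lam, pPow R p (Gfam α) α.1 = ⊥) :
    IsPLamComplete R p lam (⨁ α, Gfam α) := by
  classical
  have hlim : Order.IsSuccLimit lam := Ordinal.aleph0_le_cof.1 hcof.le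
  have comp_mem : ∀ (σ : Ordinal.{w}) (g : ⨁ α, Gfam α), g ∈ pPow R p (⨁ α, Gfam α) σ →
      ∀ α : Set.Iio lam, g α ∈ pPow R p (Gfam α) σ := by
    intro σ g hg α
    exact pPow_map_mem p _ (DirectSum.component R (Set.Iio lam) Gfam α) σ hg
  constructor
  · intro g hg
    refine DFinsupp.ext fun α => ?_
    have := comp_mem α.1 g (hg α.1 α.2) α
    rw [hlen α] at this
    simpa using this
  · intro x hx
    choose h hh using fun σ : Set.Iio lam => Submodule.Quotient.mk_surjective _ (x σ)
    set s : Set.Iio lam → Set.Iio lam := fun α => ⟨Order.succ α.1, hlim.succ_lt α.2⟩ with hs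
    set gc : ∀ α : Set.Iio lam, Gfam α := fun α => h (s α) α with hgc
    -- well-definedness: any lift of x σ with σ > α has α-component gc α
    have W : ∀ (σ α : Set.Iio lam), α.1 < σ.1 → (h σ) α = gc α := by
      intro σ α hασ
      have h1 : Submodule.Quotient.mk (h σ) = x (s α) :=
        hx (s α) σ (Order.succ_le_of_lt hασ) _ (hh σ)
      have h2 : h σ - h (s α) ∈ pPow R p (⨁ β, Gfam β) (Order.succ α.1) :=
        (Submodule.Quotient.eq _).1 (h1.trans (hh (s α)).symm)
      have h3 := comp_mem _ _ h2 α
      have h4 : (h σ - h (s α)) α ∈ pPow R p (Gfam α) α.1 := pPow_succ_le p (Gfam α) α.1 h3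
      rw [hlen α, Submodule.mem_bot] at h4
      have h5 : (h σ) α - (h (s α)) α = 0 := by simpa using h4
      rw [sub_eq_zero] at h5
      exact h5
    -- finite support
    have hfin : {α : Set.Iio lam | gc α ≠ 0}.Finite := by
      by_contra hinf
      have hinf' : {α : Set.Iio lam | gc α ≠ 0}.Infinite := hinf
      have e := hinf'.natEmbedding
      have hsup : (⨆ n : ℕ, ((e n).1 : Set.Iio lam).1) < lam := by
        refine Ordinal.iSup_lt_ord_lift ?_ fun n => ((e n).1 : Set.Iio lam).2
        simpa using hcof
      set B : Set.Iio lam := ⟨Order.succ (⨆ n : ℕ, ((e n).1 : Set.Iio lam).1),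
        hlim.succ_lt hsup⟩ with hB
      have hmem : ∀ n : ℕ, (h B) ((e n).1 : Set.Iio lam) ≠ 0 := by
        intro n
        rw [W B (e n).1 (lt_of_le_of_lt (Ordinal.le_iSup (fun n : ℕ => ((e n).1 : Set.Iio lam).1) n) (Order.lt_succ _))]
        exact (e n).2
      have hfs : {α : Set.Iio lam | (h B) α ≠ 0}.Finite := by
        have : {α : Set.Iio lam | (h B) α ≠ 0} ⊆ ↑(h B).support := by
          intro α hα
          simpa [DFinsupp.mem_support_toFun] using hα
        exact ((h B).support.finite_toSet).subset this
      have hinj : Function.Injective (fun n : ℕ => ((e n).1 : Set.Iio lam)) :=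
        fun a b hab => e.injective (Subtype.ext hab)
      exact (hfs.subset (Set.range_subset_iff.2 hmem)).not_infinite
        (Set.infinite_range_of_injective hinj)
    -- assemble g
    set g : ⨁ α, Gfam α := DirectSum.mk Gfam hfin.toFinset (fun α => gc α.1) with hg
    have hgapp : ∀ α, g α = gc α := by
      intro α
      by_cases hα : α ∈ hfin.toFinset
      · rw [hg, DirectSum.mk_apply_of_mem hα]
      · rw [hg, DirectSum.mk_apply_of_notMem hα]
        have : gc α = 0 := by
          by_contra hne
          exact hα (hfin.mem_toFinset.2 hne)
        exact this.symm
    refine ⟨g, fun σ => ?_⟩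
    rw [← hh σ]
    rw [Submodule.Quotient.eq]
    -- componentwise membership
    have C : ∀ α : Set.Iio lam, (g - h σ) α ∈ pPow R p (Gfam α) σ.1 := by
      intro α
      set τ : Set.Iio lam := ⟨max σ.1 (Order.succ α.1),
        max_lt σ.2 (hlim.succ_lt α.2)⟩ with hτ
      have h1 : g α = (h τ) α := by
        rw [hgapp α, W τ α (lt_of_lt_of_le (Order.lt_succ _) (le_max_right _ _))]
      have h2 : h τ - h σ ∈ pPow R p (⨁ β, Gfam β) σ.1 := by
        refine (Submodule.Quotient.eq _).1 ?_
        rw [hh σ]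
        exact hx σ τ (le_max_left _ _) _ (hh τ)
      have h3 := comp_mem _ _ h2 α
      have : (g - h σ) α = (h τ) α - (h σ) α := by
        rw [DFinsupp.sub_apply, h1]
      rw [this]
      simpa using h3
    set d : ⨁ α, Gfam α := g - h σ with hd
    have : d = ∑ α ∈ d.support, DirectSum.of Gfam α (d α) := (DirectSum.sum_support_of d).symm
    rw [this]
    refine Submodule.sum_mem _ fun α _ => ?_
    rw [← DirectSum.lof_eq_of R]
    exact pPow_map_mem p _ (DirectSum.lof R (Set.Iio lam) Gfam α) σ.1 (C α)
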